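/- In the Clifford algebra, for any strictly positive density ρ and any C ∈ Cl, div([Γ(ρ),ρ]# ∇(C*)) = (div([Γ(ρ),ρ]# ∇C))*. In particular, if C is self-adjoint then div([Γ(ρ),ρ]# ∇C) is self-adjoint. -/

import Mathlib

open MeasureTheory Matrix
open scoped ComplexOrder

attribute [local instance] Matrix.frobeniusNormedAddCommGroup Matrix.frobeniusNormedSpace


noncomputable def cTL (m : ℕ) : Matrix (Fin m) (Fin m) ℂ ≃ₗ[ℝ] Matrix (Fin m) (Fin m) ℂ where
  toFun := conjTranspose
  invFun := conjTranspose
  left_inv A := conjTranspose_conjTranspose A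
  right_inv A := conjTranspose_conjTranspose A
  map_add' A B := conjTranspose_add A B
  map_smul' r A := by ext i j; simp [conjTranspose_apply]

lemma conjT_intervalIntegral {m : ℕ} (f : ℝ → Matrix (Fin m) (Fin m) ℂ) (a b : ℝ) :
    (∫ s in a..b, f s)ᴴ = ∫ s in a..b, (f s)ᴴ := by
  have hc : ∀ X : Matrix (Fin m) (Fin m) ℂ, (cTL m).toContinuousLinearEquiv X = Xᴴ := fun _ => rfl
  have h := ((cTL m).toContinuousLinearEquiv).integral_comp_comm (μ := volume.restrict (Set.Ioc a b)) f
  have h' := ((cTL m).toContinuousLinearEquiv).integral_comp_comm (μ := volume.restrict (Set.Ioc b a)) f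
  change ∫ x, (f x)ᴴ ∂_ = (∫ x, f x ∂_)ᴴ at h h'
  simp only [intervalIntegral]
  rw [conjTranspose_sub, h, h']

noncomputable def eqvL {m : ℕ} (Γ : Matrix (Fin m) (Fin m) ℂ ≃⋆ₐ[ℂ] Matrix (Fin m) (Fin m) ℂ) :
    Matrix (Fin m) (Fin m) ℂ ≃ₗ[ℂ] Matrix (Fin m) (Fin m) ℂ where
  toFun := Γ
  invFun := Γ.symm
  left_inv A := Γ.symm_apply_apply A
  right_inv A := Γ.apply_symm_apply A
  map_add' A B := map_add Γ A B
  map_smul' c A := map_smul Γ c A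

lemma eqv_intervalIntegral {m : ℕ} (Γ : Matrix (Fin m) (Fin m) ℂ ≃⋆ₐ[ℂ] Matrix (Fin m) (Fin m) ℂ)
    (f : ℝ → Matrix (Fin m) (Fin m) ℂ) (a b : ℝ) :
    Γ (∫ s in a..b, f s) = ∫ s in a..b, Γ (f s) := by
  have hc : ∀ X, (eqvL Γ).toContinuousLinearEquiv X = Γ X := fun _ => rfl
  have h := ((eqvL Γ).toContinuousLinearEquiv).integral_comp_comm (μ := volume.restrict (Set.Ioc a b)) f
  have h' := ((eqvL Γ).toContinuousLinearEquiv).integral_comp_comm (μ := volume.restrict (Set.Ioc b a)) f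
  change ∫ x, Γ (f x) ∂_ = Γ (∫ x, f x ∂_) at h h'
  simp only [intervalIntegral]
  rw [map_sub, h, h']

/-- In the Clifford algebra (realized as matrices), for any strictly positive density `ρ`
and any `C`, `div([Γ(ρ),ρ]# ∇(C*)) = (div([Γ(ρ),ρ]# ∇C))*`; in particular if `C` is
self-adjoint then `div([Γ(ρ),ρ]# ∇C)` is self-adjoint. -/
theorem div_sharp_grad_star {n m : ℕ}
    (Q : Fin n → Matrix (Fin m) (Fin m) ℂ)
    (hCAR : ∀ i j, Q i * Q j + Q j * Q i = if i = j then (2 : Matrix (Fin m) (Fin m) ℂ) else 0)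
    (hsa : ∀ i, (Q i).IsHermitian)
    (Γ : Matrix (Fin m) (Fin m) ℂ ≃⋆ₐ[ℂ] Matrix (Fin m) (Fin m) ℂ)
    (hΓQ : ∀ i, Γ (Q i) = - Q i) (hΓΓ : ∀ A, Γ (Γ A) = A)
    (del delStar : Fin n → Matrix (Fin m) (Fin m) ℂ → Matrix (Fin m) (Fin m) ℂ)
    (hdel : ∀ i A, del i A = (2 : ℂ)⁻¹ • (Q i * A - Γ A * Q i))
    (hdelStar : ∀ i A, delStar i A = (2 : ℂ)⁻¹ • (Q i * A + Γ A * Q i))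
    (dvg : (Fin n → Matrix (Fin m) (Fin m) ℂ) → Matrix (Fin m) (Fin m) ℂ)
    (hdvg : ∀ V, dvg V = - ∑ i : Fin n, delStar i (V i))
    (ρ : Matrix (Fin m) (Fin m) ℂ) (hρ : ρ.PosDef)
    (sharp : Matrix (Fin m) (Fin m) ℂ → Matrix (Fin m) (Fin m) ℂ)
    (hsharp : ∀ C, sharp C = ∫ s in (0:ℝ)..1,
      cfc (fun t : ℝ => t ^ (1 - s)) (Γ ρ) * C * cfc (fun t : ℝ => t ^ s) ρ) :
    ∀ C : Matrix (Fin m) (Fin m) ℂ,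
      dvg (fun i => sharp (del i Cᴴ)) = (dvg (fun i => sharp (del i C)))ᴴ ∧
      (C.IsHermitian → (dvg (fun i => sharp (del i C))).IsHermitian) := by
  have hρsa : IsSelfAdjoint ρ := hρ.isHermitian
  have hΓcont : Continuous Γ := (eqvL Γ).toContinuousLinearEquiv.continuous
  have hΓρsa : IsSelfAdjoint (Γ ρ) := by
    rw [_root_.IsSelfAdjoint, ← map_star Γ ρ, hρsa.star_eq]
  -- cfc facts
  have hcont : ∀ (a : Matrix (Fin m) (Fin m) ℂ) (g : ℝ → ℝ),
      ContinuousOn g (spectrum ℝ a) := fun a g =>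
    (Matrix.finite_real_spectrum (A := a)).continuousOn g
  have hΓcfc : ∀ (g : ℝ → ℝ), Γ (cfc g ρ) = cfc g (Γ ρ) := fun g =>
    StarAlgHomClass.map_cfc Γ g ρ (hcont ρ g) hΓcont hρsa hΓρsa
  have hΓcfc' : ∀ (g : ℝ → ℝ), Γ (cfc g (Γ ρ)) = cfc g ρ := fun g => by
    rw [StarAlgHomClass.map_cfc Γ g (Γ ρ) (hcont _ g) hΓcont hΓρsa (by rw [hΓΓ]; exact hρsa),
      hΓΓ]
  have hsaF : ∀ (g : ℝ → ℝ), (cfc g (Γ ρ))ᴴ = cfc g (Γ ρ) := fun g =>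
    (cfc_predicate g (Γ ρ) : IsSelfAdjoint _)
  have hsaG : ∀ (g : ℝ → ℝ), (cfc g ρ)ᴴ = cfc g ρ := fun g =>
    (cfc_predicate g ρ : IsSelfAdjoint _)
  -- key lemma: (sharp X)ᴴ = Γ (sharp (Γ Xᴴ))
  have key : ∀ X, (sharp X)ᴴ = Γ (sharp (Γ Xᴴ)) := by
    intro X
    rw [hsharp, hsharp, conjT_intervalIntegral, eqv_intervalIntegral]
    have h1 : ∀ s : ℝ, (cfc (fun t : ℝ => t ^ (1 - s)) (Γ ρ) * X * cfc (fun t : ℝ => t ^ s) ρ)ᴴ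
        = cfc (fun t : ℝ => t ^ s) ρ * Xᴴ * cfc (fun t : ℝ => t ^ (1 - s)) (Γ ρ) := by
      intro s
      rw [conjTranspose_mul, conjTranspose_mul, hsaF, hsaG, mul_assoc]
    have h2 : ∀ s : ℝ, Γ (cfc (fun t : ℝ => t ^ (1 - s)) (Γ ρ) * Γ Xᴴ * cfc (fun t : ℝ => t ^ s) ρ)
        = cfc (fun t : ℝ => t ^ (1 - s)) ρ * Xᴴ * cfc (fun t : ℝ => t ^ s) (Γ ρ) := by
      intro s
      rw [_root_.map_mul, _root_.map_mul, hΓcfc', hΓcfc, hΓΓ]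
    simp only [h1, h2]
    have := intervalIntegral.integral_comp_sub_left
      (fun s => cfc (fun t : ℝ => t ^ (1 - s)) ρ * Xᴴ * cfc (fun t : ℝ => t ^ s) (Γ ρ)) 1
      (a := 0) (b := 1)
    simp only [sub_sub_cancel, sub_zero, sub_self] at this
    rw [← this]
  -- per-index identity
  have hdelH : ∀ (C : Matrix (Fin m) (Fin m) ℂ) i, (del i C)ᴴ = Γ (del i Cᴴ) := by
    intro C i
    rw [hdel, hdel, _root_.map_smul, map_sub, _root_.map_mul, _root_.map_mul, hΓQ, hΓΓ]
    have hΓCH : Γ Cᴴ = (Γ C)ᴴ := by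
      rw [← star_eq_conjTranspose, ← star_eq_conjTranspose, map_star]
    rw [hΓCH, conjTranspose_smul, conjTranspose_sub, conjTranspose_mul, conjTranspose_mul,
      (hsa i).eq, star_inv₀, star_ofNat]
    rw [neg_mul, mul_neg, sub_neg_eq_add]
    congr 1
    abel
  have hterm : ∀ (C : Matrix (Fin m) (Fin m) ℂ) i,
      delStar i (sharp (del i Cᴴ)) = (delStar i (sharp (del i C)))ᴴ := by
    intro C i
    have hM : (sharp (del i C))ᴴ = Γ (sharp (del i Cᴴ)) := by
      rw [key (del i C), hdelH C i, hΓΓ]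
    have hM2 : (Γ (sharp (del i C)))ᴴ = sharp (del i Cᴴ) := by
      have h : (Γ (sharp (del i C)))ᴴ = Γ ((sharp (del i C))ᴴ) := by
        rw [← star_eq_conjTranspose, ← star_eq_conjTranspose, map_star]
      rw [h, hM, hΓΓ]
    rw [hdelStar, hdelStar, conjTranspose_smul, conjTranspose_add, conjTranspose_mul,
      conjTranspose_mul, (hsa i).eq, hM, hM2, star_inv₀, star_ofNat, add_comm]
  intro C
  have h1 : dvg (fun i => sharp (del i Cᴴ)) = (dvg fun i => sharp (del i C))ᴴ := by
    rw [hdvg, hdvg, conjTranspose_neg, conjTranspose_sum]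
    congr 1
    exact Finset.sum_congr rfl fun i _ => hterm C i
  refine ⟨h1, fun hC => ?_⟩
  have h2 := h1
  rw [hC.eq] at h2
  exact h2.symm
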